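/- For 1 ≤ k < n with 2k ≠ n, the subgroup U(k) × U(n-k) of block-diagonal unitary matrices is self-normalizing in U(n). -/

import Mathlib

open Matrix

def IsBlockDiag (n k : ℕ) (A : Matrix (Fin n) (Fin n) ℂ) : Prop :=
  ∀ i j : Fin n, (((i : ℕ) < k ∧ (j : ℕ) ≥ k) ∨ ((i : ℕ) ≥ k ∧ (j : ℕ) < k)) → A i j = 0

lemma IsBlockDiag.mul {n k : ℕ} {A B : Matrix (Fin n) (Fin n) ℂ}
    (hA : IsBlockDiag n k A) (hB : IsBlockDiag n k B) : IsBlockDiag n k (A * B) := by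
  intro i j hij
  rw [Matrix.mul_apply]
  apply Finset.sum_eq_zero
  intro l _
  rcases hij with ⟨hi, hj⟩ | ⟨hi, hj⟩
  · rcases lt_or_ge (l : ℕ) k with hl | hl
    · rw [hB l j (Or.inl ⟨hl, hj⟩), mul_zero]
    · rw [hA i l (Or.inl ⟨hi, hl⟩), zero_mul]
  · rcases lt_or_ge (l : ℕ) k with hl | hl
    · rw [hA i l (Or.inr ⟨hi, hl⟩), zero_mul]
    · rw [hB l j (Or.inr ⟨hl, hj⟩), mul_zero]

lemma IsBlockDiag.star {n k : ℕ} {A : Matrix (Fin n) (Fin n) ℂ}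
    (hA : IsBlockDiag n k A) : IsBlockDiag n k (star A) := by
  intro i j hij
  rw [Matrix.star_apply, hA j i (by tauto), star_zero]

lemma IsBlockDiag.diagonal {n k : ℕ} (d : Fin n → ℂ) :
    IsBlockDiag n k (Matrix.diagonal d) := by
  intro i j hij
  have : i ≠ j := by rintro rfl; omega
  simp [Matrix.diagonal_apply_ne _ this]

lemma diag_mem_unitary {n : ℕ} (d : Fin n → ℂ) (hd : ∀ i, d i * star (d i) = 1) :
    Matrix.diagonal d ∈ Matrix.unitaryGroup (Fin n) ℂ := by
  rw [Matrix.mem_unitaryGroup_iff]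
  ext i j
  simp [Matrix.star_eq_conjTranspose, Matrix.diagonal_conjTranspose,
    Matrix.diagonal_mul_diagonal, Matrix.diagonal_apply, Matrix.one_apply]
  rcases eq_or_ne i j with h | h
  · subst h; simpa using hd i
  · simp [h]

lemma swap_mem_unitary {n : ℕ} (σ : Equiv.Perm (Fin n)) :
    (Matrix.of fun i j => if σ j = i then (1:ℂ) else 0) ∈ Matrix.unitaryGroup (Fin n) ℂ := by
  rw [Matrix.mem_unitaryGroup_iff]
  ext i j
  simp only [Matrix.mul_apply, Matrix.star_apply, Matrix.of_apply, Matrix.one_apply]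
  rw [Finset.sum_eq_single (σ.symm i)]
  · simp [Equiv.apply_eq_iff_eq_symm_apply, eq_comm]
  · intro b _ hb
    have : σ b ≠ i := fun h => hb (by simp [← h])
    simp [this]
  · simp

lemma sum_ite_lt_fin {n k : ℕ} (hkn : k ≤ n) (c d : ℂ) :
    ∑ i : Fin n, (if (i : ℕ) < k then c else d) = k * c + (n - k : ℕ) * d := by
  rw [Fin.sum_univ_eq_sum_range (fun j => if j < k then c else d) n, Finset.range_eq_Ico,
    ← Finset.sum_Ico_consecutive _ (Nat.zero_le k) hkn]
  have h1 : ∑ i ∈ Finset.Ico 0 k, (if i < k then c else d) = k * c := by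
    rw [Finset.sum_congr rfl (fun i hi => if_pos (Finset.mem_Ico.mp hi).2)]
    simp [mul_comm]
  have h2 : ∑ i ∈ Finset.Ico k n, (if i < k then c else d) = (n - k : ℕ) * d := by
    rw [Finset.sum_congr rfl (fun i hi => if_neg (by
      have := (Finset.mem_Ico.mp hi).1; omega))]
    simp [Nat.card_Ico, mul_comm]
  rw [h1, h2]

/-- For `1 ≤ k < n` with `2k ≠ n`, the subgroup `U(k) × U(n-k)` of block-diagonal
unitary matrices is self-normalizing in `U(n)`: `g` conjugates it onto itself iff
`g` itself is block diagonal. -/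
theorem Uk_Unk_self_normalizing (n k : ℕ) (hk : 1 ≤ k) (hkn : k < n) (h2k : 2 * k ≠ n)
    (g : Matrix.unitaryGroup (Fin n) ℂ) :
    (∀ h : Matrix.unitaryGroup (Fin n) ℂ,
        IsBlockDiag n k (h : Matrix (Fin n) (Fin n) ℂ) ↔
          IsBlockDiag n k ((g * h * g⁻¹ : Matrix.unitaryGroup (Fin n) ℂ) :
            Matrix (Fin n) (Fin n) ℂ)) ↔
      IsBlockDiag n k (g : Matrix (Fin n) (Fin n) ℂ) := by
  constructor
  · intro H
    -- the sign matrix D = diag(1_k, -1_{n-k})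
    set ε : Fin n → ℂ := fun i => if (i : ℕ) < k then 1 else -1 with hεdef
    have hεu : ∀ i, ε i * star (ε i) = 1 := by
      intro i; by_cases h : (i : ℕ) < k <;> simp [hεdef, h]
    set D : Matrix.unitaryGroup (Fin n) ℂ := ⟨Matrix.diagonal ε, diag_mem_unitary ε hεu⟩
      with hDdef
    set m : Matrix.unitaryGroup (Fin n) ℂ := g * D * g⁻¹ with hmdef
    have hDbd : IsBlockDiag n k (D : Matrix (Fin n) (Fin n) ℂ) := IsBlockDiag.diagonal ε
    have hmbd : IsBlockDiag n k (m : Matrix (Fin n) (Fin n) ℂ) := (H D).mp hDbd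
    -- m commutes with every block-diagonal unitary
    have hcomm : ∀ h : Matrix.unitaryGroup (Fin n) ℂ,
        IsBlockDiag n k (h : Matrix (Fin n) (Fin n) ℂ) → m * h = h * m := by
      intro h hh
      have hh' : IsBlockDiag n k ((g⁻¹ * h * g : Matrix.unitaryGroup (Fin n) ℂ) :
          Matrix (Fin n) (Fin n) ℂ) := by
        apply (H (g⁻¹ * h * g)).mpr
        have he : g * (g⁻¹ * h * g) * g⁻¹ = h := by group
        rwa [he]
      have key : Matrix.diagonal ε * ((g⁻¹ * h * g : Matrix.unitaryGroup (Fin n) ℂ) :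
            Matrix (Fin n) (Fin n) ℂ)
          = ((g⁻¹ * h * g : Matrix.unitaryGroup (Fin n) ℂ) : Matrix (Fin n) (Fin n) ℂ)
            * Matrix.diagonal ε := by
        ext i j
        rw [Matrix.diagonal_mul, Matrix.mul_diagonal]
        by_cases hi : (i : ℕ) < k <;> by_cases hj : (j : ℕ) < k
        · simp [hεdef, hi, hj, mul_comm]
        · rw [hh' i j (Or.inl ⟨hi, le_of_not_gt hj⟩)]; ring
        · rw [hh' i j (Or.inr ⟨le_of_not_gt hi, hj⟩)]; ring
        · simp [hεdef, hi, hj, mul_comm]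
      have keyg : D * (g⁻¹ * h * g) = (g⁻¹ * h * g) * D := Subtype.ext key
      calc m * h = g * (D * (g⁻¹ * h * g)) * g⁻¹ := by rw [hmdef]; group
        _ = g * ((g⁻¹ * h * g) * D) * g⁻¹ := by rw [keyg]
        _ = h * m := by rw [hmdef]; group
    -- m is diagonal
    have hdiag : ∀ i j : Fin n, i ≠ j → (m : Matrix (Fin n) (Fin n) ℂ) i j = 0 := by
      intro i j hij
      set d : Fin n → ℂ := fun l => if l = i then -1 else 1 with hddef
      have hdu : ∀ l, d l * star (d l) = 1 := by
        intro l; by_cases h : l = i <;> simp [hddef, h]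
      have hc := congrArg Subtype.val
        (hcomm ⟨Matrix.diagonal d, diag_mem_unitary d hdu⟩ (IsBlockDiag.diagonal d))
      have h2 := congrFun (congrFun hc i) j
      simp only [Submonoid.coe_mul] at h2
      rw [Matrix.mul_diagonal, Matrix.diagonal_mul] at h2
      simp only [hddef, if_pos rfl, if_neg (Ne.symm hij)] at h2
      -- m i j * 1 = -1 * m i j
      have : (2 : ℂ) * (m : Matrix (Fin n) (Fin n) ℂ) i j = 0 := by linear_combination h2
      simpa using this
    set f : Fin n → ℂ := fun i => (m : Matrix (Fin n) (Fin n) ℂ) i i with hfdef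
    have hmval : (m : Matrix (Fin n) (Fin n) ℂ) = Matrix.diagonal f := by
      ext i j
      rcases eq_or_ne i j with h | h
      · subst h; simp [Matrix.diagonal_apply_eq, hfdef]
      · rw [hdiag i j h, Matrix.diagonal_apply_ne _ h]
    -- f is constant on each block
    have hconst : ∀ p q : Fin n, (((p : ℕ) < k ∧ (q : ℕ) < k) ∨ ((p : ℕ) ≥ k ∧ (q : ℕ) ≥ k)) →
        f p = f q := by
      intro p q hpq
      set σ := Equiv.swap p q with hσdef
      set S : Matrix.unitaryGroup (Fin n) ℂ :=
        ⟨Matrix.of fun i j => if σ j = i then (1:ℂ) else 0, swap_mem_unitary σ⟩ with hSdef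
      have hSbd : IsBlockDiag n k (S : Matrix (Fin n) (Fin n) ℂ) := by
        intro i j hij
        simp only [hSdef, Matrix.of_apply]
        rw [if_neg]
        intro he
        rw [hσdef] at he
        rcases eq_or_ne j p with rfl | hjp
        · rw [Equiv.swap_apply_left] at he; subst he; omega
        · rcases eq_or_ne j q with rfl | hjq
          · rw [Equiv.swap_apply_right] at he; subst he; omega
          · rw [Equiv.swap_apply_of_ne_of_ne hjp hjq] at he; subst he; omega
      have hc := congrArg Subtype.val (hcomm S hSbd)
      have h2 := congrFun (congrFun hc p) q
      simp only [Submonoid.coe_mul, hmval] at h2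
      rw [Matrix.diagonal_mul, Matrix.mul_diagonal] at h2
      simp only [hSdef, Matrix.of_apply, hσdef, Equiv.swap_apply_right, if_pos rfl] at h2
      simpa using h2
    -- involution
    have hDD : D * D = 1 := by
      apply Subtype.ext
      simp only [Submonoid.coe_mul, hDdef, OneMemClass.coe_one]
      rw [Matrix.diagonal_mul_diagonal]
      ext i j
      rcases eq_or_ne i j with h | h
      · subst h
        rw [Matrix.diagonal_apply_eq]
        by_cases hi : (i : ℕ) < k <;> simp [hεdef, hi, Matrix.one_apply]
      · rw [Matrix.diagonal_apply_ne _ h, Matrix.one_apply_ne h]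
    have hmm : m * m = 1 := by
      rw [hmdef]
      calc g * D * g⁻¹ * (g * D * g⁻¹) = g * (D * D) * g⁻¹ := by group
        _ = 1 := by rw [hDD]; group
    have hff : ∀ i : Fin n, f i * f i = 1 := by
      intro i
      have hc := congrArg Subtype.val hmm
      simp only [Submonoid.coe_mul, hmval, OneMemClass.coe_one] at hc
      rw [Matrix.diagonal_mul_diagonal] at hc
      have := congrFun (congrFun hc i) i
      rw [Matrix.diagonal_apply_eq] at this
      simpa [Matrix.one_apply] using this
    set i₀ : Fin n := ⟨0, by omega⟩ with hi₀
    set j₀ : Fin n := ⟨k, hkn⟩ with hj₀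
    set a : ℂ := f i₀ with ha
    set b : ℂ := f j₀ with hb
    have hfa : ∀ i : Fin n, (i : ℕ) < k → f i = a :=
      fun i hi => hconst i i₀ (Or.inl ⟨hi, by simp [hi₀]; omega⟩)
    have hfb : ∀ i : Fin n, ¬ (i : ℕ) < k → f i = b :=
      fun i hi => hconst i j₀ (Or.inr ⟨le_of_not_gt hi, by simp [hj₀]⟩)
    -- trace
    have htr : Matrix.trace (m : Matrix (Fin n) (Fin n) ℂ)
        = Matrix.trace (Matrix.diagonal ε) := by
      have hval : (m : Matrix (Fin n) (Fin n) ℂ)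
          = (g : Matrix (Fin n) (Fin n) ℂ) * Matrix.diagonal ε
            * star (g : Matrix (Fin n) (Fin n) ℂ) := rfl
      rw [hval, Matrix.trace_mul_comm, ← Matrix.mul_assoc]
      have : star (g : Matrix (Fin n) (Fin n) ℂ) * (g : Matrix (Fin n) (Fin n) ℂ)
          = 1 := g.2.1
      rw [this, Matrix.one_mul]
    have htrm : Matrix.trace (m : Matrix (Fin n) (Fin n) ℂ)
        = (k : ℂ) * a + ((n - k : ℕ) : ℂ) * b := by
      rw [hmval, Matrix.trace_diagonal]
      rw [show (∑ i : Fin n, f i) = ∑ i : Fin n, (if (i : ℕ) < k then a else b) from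
        Finset.sum_congr rfl (fun i _ => by
          by_cases hi : (i : ℕ) < k
          · rw [if_pos hi, hfa i hi]
          · rw [if_neg hi, hfb i hi])]
      exact sum_ite_lt_fin (le_of_lt hkn) a b
    have htrD : Matrix.trace (Matrix.diagonal ε)
        = (k : ℂ) * 1 + ((n - k : ℕ) : ℂ) * (-1) := by
      rw [Matrix.trace_diagonal]
      exact sum_ite_lt_fin (le_of_lt hkn) 1 (-1)
    have heq : (k : ℂ) * a + ((n - k : ℕ) : ℂ) * b
        = (k : ℂ) * 1 + ((n - k : ℕ) : ℂ) * (-1) := by rw [← htrm, ← htrD, htr]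
    have hnk : (0 : ℕ) < n - k := by omega
    have hne2 : n - k ≠ k := by omega
    have ha1 : a = 1 ∨ a = -1 := mul_self_eq_one_iff.mp (hff i₀)
    have hb1 : b = 1 ∨ b = -1 := mul_self_eq_one_iff.mp (hff j₀)
    have hab : a = 1 ∧ b = -1 := by
      rcases ha1 with h1 | h1 <;> rcases hb1 with hb' | hb'
      · exfalso
        rw [h1, hb'] at heq
        have h0 : ((n - k : ℕ) : ℂ) = ((0 : ℕ) : ℂ) := by push_cast; linear_combination heq / 2
        have := Nat.cast_injective (R := ℂ) h0
        omega
      · exact ⟨h1, hb'⟩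
      · exfalso
        rw [h1, hb'] at heq
        have h0 : ((n - k : ℕ) : ℂ) = ((k : ℕ) : ℂ) := by push_cast; linear_combination heq / 2
        have := Nat.cast_injective (R := ℂ) h0
        omega
      · exfalso
        rw [h1, hb'] at heq
        have h0 : ((k : ℕ) : ℂ) = ((0 : ℕ) : ℂ) := by push_cast; linear_combination -heq / 2
        have := Nat.cast_injective (R := ℂ) h0
        omega
    -- conclude m = D
    have hfε : f = ε := by
      funext i
      by_cases hi : (i : ℕ) < k
      · rw [hfa i hi, hab.1, hεdef]; simp [hi]
      · rw [hfb i hi, hab.2, hεdef]; simp [hi]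
    have hmD : m = D := by
      apply Subtype.ext
      rw [show (D : Matrix (Fin n) (Fin n) ℂ) = Matrix.diagonal ε from rfl, hmval, hfε]
    have hgD : g * D = D * g := by
      have : g * D * g⁻¹ * g = D * g := by rw [← hmdef, hmD]
      calc g * D = g * D * g⁻¹ * g := by group
        _ = D * g := this
    have hgDval : (g : Matrix (Fin n) (Fin n) ℂ) * Matrix.diagonal ε
        = Matrix.diagonal ε * (g : Matrix (Fin n) (Fin n) ℂ) := congrArg Subtype.val hgD
    intro i j hij
    have h2 := congrFun (congrFun hgDval i) j
    rw [Matrix.mul_diagonal, Matrix.diagonal_mul] at h2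
    rcases hij with ⟨hi, hj⟩ | ⟨hi, hj⟩
    · rw [hεdef] at h2
      simp only [if_pos hi, if_neg (not_lt_of_ge hj)] at h2
      have : (2 : ℂ) * (g : Matrix (Fin n) (Fin n) ℂ) i j = 0 := by linear_combination -h2
      simpa using this
    · rw [hεdef] at h2
      simp only [if_neg (not_lt_of_ge hi), if_pos hj] at h2
      have : (2 : ℂ) * (g : Matrix (Fin n) (Fin n) ℂ) i j = 0 := by linear_combination h2
      simpa using this
  · -- easy direction
    intro hg h
    have hginv : IsBlockDiag n k ((g⁻¹ : Matrix.unitaryGroup (Fin n) ℂ) :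
        Matrix (Fin n) (Fin n) ℂ) := hg.star
    constructor
    · intro hh
      exact (hg.mul hh).mul hginv
    · intro hc
      have he : h = g⁻¹ * (g * h * g⁻¹) * g := by group
      rw [he]
      exact (hginv.mul hc).mul hg
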